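/- Let g: (0, ∞) → ℝ be bounded, and suppose there exist constants C̄ > 0 and R > 0 such that for all s > t > 0: g(s) ≤ ⌊s/t⌋^m (t^m/s^m)(g(t) + 1/t) + (C̄/s^m)·(s^m − ⌊s/t⌋^m t^m + ⌊s/t⌋^m((t+R)^m − (t−R)^m)). Then the limit lim_{t→∞} g(t) exists. -/
import Mathlib

open Filter Topology

/-- For fixed `t > 0`, `⌊s/t⌋ * t / s → 1` as `s → ∞`. -/
lemma floor_mul_div_tendsto_one (t : ℝ) (ht : 0 < t) :
    Tendsto (fun s : ℝ => (⌊s / t⌋₊ : ℝ) * t / s) atTop (nhds 1) := by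
  have hlow : Tendsto (fun s : ℝ => 1 - t / s) atTop (nhds 1) := by
    have h0 : Tendsto (fun s : ℝ => t / s) atTop (nhds 0) :=
      Tendsto.div_atTop tendsto_const_nhds tendsto_id
    have h1 : Tendsto (fun s : ℝ => 1 - t / s) atTop (nhds (1 - 0)) :=
      tendsto_const_nhds.sub h0
    simpa using h1
  refine tendsto_of_tendsto_of_tendsto_of_le_of_le' hlow tendsto_const_nhds ?_ ?_
  · filter_upwards [eventually_gt_atTop (0:ℝ)] with s hs
    have hst : (0:ℝ) ≤ s / t := le_of_lt (div_pos hs ht)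
    have h1 : s / t - 1 ≤ (⌊s / t⌋₊ : ℝ) := by
      have := Nat.sub_one_lt_floor (s / t)
      linarith
    have : (s / t - 1) * t ≤ (⌊s / t⌋₊ : ℝ) * t :=
      mul_le_mul_of_nonneg_right h1 ht.le
    have h2 : s - t ≤ (⌊s / t⌋₊ : ℝ) * t := by
      have : (s / t - 1) * t = s - t := by field_simp
      linarith
    have h3 : (s - t) / s ≤ (⌊s / t⌋₊ : ℝ) * t / s := by gcongr
    have h4 : 1 - t / s = (s - t) / s := by field_simp
    linarith
  · filter_upwards [eventually_gt_atTop (0:ℝ)] with s hs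
    have hst : (0:ℝ) ≤ s / t := le_of_lt (div_pos hs ht)
    have h1 : (⌊s / t⌋₊ : ℝ) ≤ s / t := Nat.floor_le hst
    have : (⌊s / t⌋₊ : ℝ) * t ≤ s := by
      have := mul_le_mul_of_nonneg_right h1 ht.le
      rwa [div_mul_cancel₀] at this
      exact ht.ne'
    exact (div_le_one hs).2 this

theorem almost_subadditive_limit_exists
    (m : ℕ) (hm : 1 ≤ m) (g : ℝ → ℝ)
    (hbdd : ∃ M : ℝ, ∀ t : ℝ, 0 < t → |g t| ≤ M)
    (C R : ℝ) (hC : 0 < C) (hR : 0 < R)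
    (hsub : ∀ s t : ℝ, 0 < t → t < s →
      g s ≤ (⌊s / t⌋₊ : ℝ) ^ m * (t ^ m / s ^ m) * (g t + 1 / t) +
        (C / s ^ m) * (s ^ m - (⌊s / t⌋₊ : ℝ) ^ m * t ^ m +
          (⌊s / t⌋₊ : ℝ) ^ m * ((t + R) ^ m - (t - R) ^ m))) :
    ∃ L : ℝ, Filter.Tendsto g Filter.atTop (nhds L) := by
  obtain ⟨M, hM⟩ := hbdd
  have hev : ∀ᶠ s : ℝ in atTop, |g s| ≤ M := by
    filter_upwards [eventually_gt_atTop (0:ℝ)] with s hs using hM s hs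
  have hbd_le : IsBoundedUnder (· ≤ ·) atTop g :=
    ⟨M, Filter.eventually_map.2 (by filter_upwards [hev] with s hs using (abs_le.1 hs).2)⟩
  have hbd_ge : IsBoundedUnder (· ≥ ·) atTop g :=
    ⟨-M, Filter.eventually_map.2 (by filter_upwards [hev] with s hs using (abs_le.1 hs).1)⟩
  set L := limsup g atTop with hL
  set l := liminf g atTop with hl
  -- Step 1: L ≤ g t + 1/t + C * ((t+R)^m - (t-R)^m)/t^m for every t > 0
  have key : ∀ t : ℝ, 0 < t →
      L ≤ g t + 1 / t + C * ((t + R) ^ m - (t - R) ^ m) / t ^ m := by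
    intro t ht
    set G := g t + 1 / t with hG
    set D := (t + R) ^ m - (t - R) ^ m with hD
    set a : ℝ → ℝ := fun s => ((⌊s / t⌋₊ : ℝ) * t / s) ^ m with ha
    have hta : Tendsto a atTop (nhds 1) := by
      have := (floor_mul_div_tendsto_one t ht).pow m
      simpa using this
    set F : ℝ → ℝ := fun s => a s * G + C * (1 - a s) + C * a s * D / t ^ m with hF
    have htF : Tendsto F atTop (nhds (G + C * D / t ^ m)) := by
      have h1 : Tendsto (fun s => a s * G) atTop (nhds (1 * G)) := hta.mul_const G
      have h2 : Tendsto (fun s => C * (1 - a s)) atTop (nhds (C * (1 - 1))) :=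
        tendsto_const_nhds.mul (tendsto_const_nhds.sub hta)
      have h3 : Tendsto (fun s => C * a s * D / t ^ m) atTop
          (nhds (C * 1 * D / t ^ m)) :=
        ((tendsto_const_nhds.mul hta).mul_const D).div_const _
      have := (h1.add h2).add h3
      simpa using this
    have hgle : ∀ᶠ s : ℝ in atTop, g s ≤ F s := by
      filter_upwards [eventually_gt_atTop t] with s hst
      have hs : 0 < s := ht.trans hst
      have hsm : (s : ℝ) ^ m ≠ 0 := pow_ne_zero m hs.ne'
      have htm : (t : ℝ) ^ m ≠ 0 := pow_ne_zero m ht.ne'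
      have := hsub s t ht hst
      have heq : (⌊s / t⌋₊ : ℝ) ^ m * (t ^ m / s ^ m) * (g t + 1 / t) +
          (C / s ^ m) * (s ^ m - (⌊s / t⌋₊ : ℝ) ^ m * t ^ m +
            (⌊s / t⌋₊ : ℝ) ^ m * ((t + R) ^ m - (t - R) ^ m)) = F s := by
        simp only [hF, ha, hG, hD, div_pow, mul_pow]
        field_simp
        ring
      exact heq ▸ this
    have hFbd : IsBoundedUnder (· ≤ ·) atTop F := htF.isBoundedUnder_le
    have hgcb : IsCoboundedUnder (· ≤ ·) atTop g := hbd_ge.isCoboundedUnder_le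
    calc L ≤ limsup F atTop := limsup_le_limsup hgle hgcb hFbd
    _ = G + C * D / t ^ m := htF.limsup_eq
  -- Step 2: error term tends to 0
  have herr : Tendsto (fun t : ℝ => 1 / t + C * ((t + R) ^ m - (t - R) ^ m) / t ^ m)
      atTop (nhds 0) := by
    have h1 : Tendsto (fun t : ℝ => 1 / t) atTop (nhds 0) := by
      simpa [one_div] using tendsto_inv_atTop_zero
    have hq : Tendsto (fun t : ℝ => C * (((t + R) / t) ^ m - ((t - R) / t) ^ m))
        atTop (nhds (C * (1 - 1))) := by
      have hR0 : Tendsto (fun t : ℝ => R / t) atTop (nhds 0) :=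
        Tendsto.div_atTop tendsto_const_nhds tendsto_id
      have hp : Tendsto (fun t : ℝ => (t + R) / t) atTop (nhds 1) := by
        have : Tendsto (fun t : ℝ => 1 + R / t) atTop (nhds (1 + 0)) :=
          tendsto_const_nhds.add hR0
        refine (this.congr' ?_).mono_right (by norm_num)
        filter_upwards [eventually_ne_atTop (0:ℝ)] with t htne
        field_simp
      have hn : Tendsto (fun t : ℝ => (t - R) / t) atTop (nhds 1) := by
        have : Tendsto (fun t : ℝ => 1 - R / t) atTop (nhds (1 - 0)) :=
          tendsto_const_nhds.sub hR0
        refine (this.congr' ?_).mono_right (by norm_num)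
        filter_upwards [eventually_ne_atTop (0:ℝ)] with t htne
        field_simp
      have hdiff : Tendsto (fun t : ℝ => ((t + R) / t) ^ m - ((t - R) / t) ^ m)
          atTop (nhds (1 ^ m - 1 ^ m)) := (hp.pow m).sub (hn.pow m)
      have := (tendsto_const_nhds (x := C)).mul hdiff
      simpa using this
    have h2 : Tendsto (fun t : ℝ => C * ((t + R) ^ m - (t - R) ^ m) / t ^ m)
        atTop (nhds 0) := by
      refine (hq.congr' ?_).mono_right (by norm_num)
      filter_upwards [eventually_ne_atTop (0:ℝ)] with t htne
      rw [div_pow, div_pow]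
      field_simp
    simpa using h1.add h2
  -- Step 3: L ≤ l
  have hLl : L ≤ l := by
    refine le_of_forall_pos_le_add ?_
    intro ε hε
    have hεev : ∀ᶠ t : ℝ in atTop,
        1 / t + C * ((t + R) ^ m - (t - R) ^ m) / t ^ m ≤ ε := by
      have := herr.eventually (ge_mem_nhds (show (0:ℝ) < ε from hε))
      filter_upwards [this] with t h using h
    have hLg : ∀ᶠ t : ℝ in atTop, L - ε ≤ g t := by
      filter_upwards [hεev, eventually_gt_atTop (0:ℝ)] with t hεt ht
      have := key t ht
      linarith
    have : L - ε ≤ l := le_liminf_of_le hbd_le.isCoboundedUnder_ge hLg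
    linarith
  have hlL : l ≤ L := liminf_le_limsup hbd_le hbd_ge
  exact ⟨L, tendsto_of_liminf_eq_limsup (le_antisymm hlL hLl) rfl hbd_le hbd_ge⟩
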